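/- The subgroup Dom ψ³ of F equals the subgroup generated by the nine elements S⁴, T⁴, ST², S⁻²T²S, S⁻¹T²S², T⁻¹ST, TST⁻¹, (TS)⁻¹S(TS), (T⁻¹S)⁻¹S(T⁻¹S); this subgroup has index 8 in F; and the third iterate ψ³ = ψ∘ψ∘ψ satisfies ψ³(S⁴) = S, ψ³(T⁴) = T, and ψ³(g) = 1 for each of the remaining seven listed generators g. -/
import Mathlib


noncomputable section

/-- The action of `Equiv.Perm X` on `X → G` by permuting coordinates. -/
def permAut (X G : Type) [Group G] : Equiv.Perm X →* MulAut (X → G) where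
  toFun σ :=
  { toFun := fun f => f ∘ ⇑σ⁻¹
    invFun := fun f => f ∘ ⇑σ
    left_inv := fun f => by funext x; simp
    right_inv := fun f => by funext x; simp
    map_mul' := fun f g => rfl }
  map_one' := by ext f x; simp
  map_mul' := fun σ τ => by
    ext f x
    simp [Function.comp, mul_inv_rev]

/-- The wreath product `G ≀ C₂` with base alphabet `Bool`. -/
abbrev Wr (G : Type) [Group G] := (Bool → G) ⋊[permAut Bool G] Equiv.Perm Bool

/-- `pair g₀ g₁` is the element `⟨g₀, g₁⟩` of the base group. -/
def pair {G : Type} [Group G] (g₀ g₁ : G) : Bool → G := fun x => bif x then g₁ else g₀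

/-- The nontrivial element of `Sym({0,1})`. -/
def σswap : Equiv.Perm Bool := Equiv.swap false true

namespace Rabbit

/-- The free group on two generators `S`, `T`. -/
abbrev F := FreeGroup Bool

def Sg : F := FreeGroup.of false
def Tg : F := FreeGroup.of true

/-- The wreath recursion `Φ(T) = ⟨1, S⁻¹T⁻¹⟩σ`, `Φ(S) = ⟨T, 1⟩`. -/
def Phi : F →* Wr F := FreeGroup.lift fun x =>
  if x then ⟨pair 1 (Sg⁻¹ * Tg⁻¹), σswap⟩ else ⟨pair Tg 1, 1⟩

/-- The section `g|ₓ`. -/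
def sec (g : F) (x : Bool) : F := (Phi g).left x

/-- `Φ(g)` is inactive. -/
def inactive (g : F) : Prop := (Phi g).right = 1

open scoped Classical in
/-- The map `ψ̄`. -/
def psibar (g : F) : F := if inactive g then sec g false else Tg * sec g false

end Rabbit

namespace Rabbit

/-- The nine listed generators of `Dom ψ³`. -/
def gens : Set F :=
  {Sg ^ 4, Tg ^ 4, Sg * Tg ^ 2, Sg⁻¹ * Sg⁻¹ * Tg ^ 2 * Sg, Sg⁻¹ * Tg ^ 2 * Sg ^ 2,
    Tg⁻¹ * Sg * Tg, Tg * Sg * Tg⁻¹, (Tg * Sg)⁻¹ * Sg * (Tg * Sg),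
    (Tg⁻¹ * Sg)⁻¹ * Sg * (Tg⁻¹ * Sg)}

/-- The third iterate of the virtual endomorphism `ψ` (defined on `Dom ψ³`
as the threefold first-coordinate section). -/
def psi3 (g : F) : F := sec (sec (sec g false) false) false

end Rabbit

namespace Rabbit

/-! ### Auxiliary machinery -/

/-- The activity homomorphism. -/
def act : F →* Equiv.Perm Bool := SemidirectProduct.rightHom.comp Phi

lemma inactive_iff (g : F) : inactive g ↔ act g = 1 := Iff.rfl

lemma permAut_apply (σ : Equiv.Perm Bool) (f : Bool → F) (x : Bool) :
    (permAut Bool F σ) f x = f (σ⁻¹ x) := rfl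

lemma Phi_S : Phi Sg = ⟨pair Tg 1, 1⟩ := by
  simp only [Phi, Sg, FreeGroup.lift_apply_of, Bool.false_eq_true, if_false]

lemma Phi_T : Phi Tg = ⟨pair 1 (Sg⁻¹ * Tg⁻¹), σswap⟩ := by
  simp only [Phi, Tg, FreeGroup.lift_apply_of, if_true]

@[simp] lemma act_S : act Sg = 1 := by
  simp [act, Phi_S]

@[simp] lemma act_T : act Tg = σswap := by
  simp [act, Phi_T]

@[simp] lemma sec_S_false : sec Sg false = Tg := by simp [sec, Phi_S, pair]
@[simp] lemma sec_S_true : sec Sg true = 1 := by simp [sec, Phi_S, pair]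
@[simp] lemma sec_T_false : sec Tg false = 1 := by simp [sec, Phi_T, pair]
@[simp] lemma sec_T_true : sec Tg true = Sg⁻¹ * Tg⁻¹ := by simp [sec, Phi_T, pair]

@[simp] lemma sec_mul (g h : F) (x : Bool) :
    sec (g * h) x = sec g x * sec h ((act g)⁻¹ x) := by
  simp [sec, act, map_mul, SemidirectProduct.mul_left, permAut_apply]

@[simp] lemma sec_inv (g : F) (x : Bool) :
    sec g⁻¹ x = (sec g (act g x))⁻¹ := by
  rw [sec, map_inv, SemidirectProduct.inv_left, permAut_apply, inv_inv, Pi.inv_apply]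
  rfl

@[simp] lemma sec_one (x : Bool) : sec 1 x = 1 := by
  simp [sec]

@[simp] lemma σswap_inv : σswap⁻¹ = σswap := by simp [σswap]
@[simp] lemma σswap_mul : σswap * σswap = 1 := by simp [σswap]
@[simp] lemma σswap_mul' (p : Equiv.Perm Bool) : σswap * (σswap * p) = p := by
  rw [← mul_assoc, σswap_mul, one_mul]
@[simp] lemma σswap_false : σswap false = true := Equiv.swap_apply_left _ _
@[simp] lemma σswap_true : σswap true = false := Equiv.swap_apply_right _ _

lemma σswap_ne_one : σswap ≠ 1 := fun h => by
  simpa using congrArg (fun p : Equiv.Perm Bool => p false) h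

end Rabbit

namespace Rabbit

/-- shorthand for the subgroup generated by the nine generators -/
def Hh : Subgroup F := Subgroup.closure gens

lemma Hmem_congr {a b : F} (h : a = b) (hb : b ∈ Hh) : a ∈ Hh := h ▸ hb

/-- The subgroup `Dom ψ³`. -/
def Dsub : Subgroup F where
  carrier := {g : F | inactive g ∧ inactive (sec g false) ∧ inactive (sec (sec g false) false)}
  one_mem' := by
    refine ⟨?_, ?_, ?_⟩ <;> simp [inactive_iff]
  mul_mem' := by
    rintro a b ⟨a1, a2, a3⟩ ⟨b1, b2, b3⟩
    simp only [inactive_iff] at a1 a2 a3 b1 b2 b3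
    refine ⟨?_, ?_, ?_⟩ <;>
      simp [inactive_iff, map_mul, a1, a2, a3, b1, b2, b3]
  inv_mem' := by
    rintro a ⟨a1, a2, a3⟩
    simp only [inactive_iff] at a1 a2 a3
    refine ⟨?_, ?_, ?_⟩ <;>
      simp [inactive_iff, map_inv, a1, a2, a3]

lemma mem_Dsub {g : F} :
    g ∈ Dsub ↔ inactive g ∧ inactive (sec g false) ∧ inactive (sec (sec g false) false) :=
  Iff.rfl

/-- the complete coset invariant -/
def chiB (g : F) : Bool × Bool × Bool :=
  (act g false, act (sec g false) false, act (sec (sec g false) false) false)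

lemma chiB_mul {g : F} (hg : g ∈ Dsub) (h : F) : chiB (g * h) = chiB h := by
  obtain ⟨h1, h2, h3⟩ := hg
  rw [inactive_iff] at h1 h2 h3
  simp [chiB, map_mul, h1, h2, h3]

lemma memD_chiB {g : F} (hg : g ∈ Dsub) : chiB g = (false, false, false) := by
  obtain ⟨h1, h2, h3⟩ := hg
  rw [inactive_iff] at h1 h2 h3
  simp [chiB, h1, h2, h3]

/-- the transversal -/
def R : Fin 8 → F
  | 0 => 1
  | 1 => Sg
  | 2 => Sg⁻¹
  | 3 => Tg
  | 4 => Tg⁻¹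
  | 5 => Sg * Sg
  | 6 => Sg⁻¹ * Tg
  | 7 => Sg⁻¹ * Tg⁻¹

def V : Fin 8 → Bool × Bool × Bool
  | 0 => (false, false, false)
  | 1 => (false, true, false)
  | 2 => (false, true, true)
  | 3 => (true, false, false)
  | 4 => (true, true, false)
  | 5 => (false, false, true)
  | 6 => (true, true, true)
  | 7 => (true, false, true)

lemma chiB_R : ∀ j : Fin 8, chiB (R j) = V j := by
  intro j
  fin_cases j <;> simp [R, V, chiB]

/-- the nine generators are in the closure -/
lemma mH1 : Sg ^ 4 ∈ Hh := Subgroup.subset_closure (by simp [gens])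
lemma mH2 : Tg ^ 4 ∈ Hh := Subgroup.subset_closure (by simp [gens])
lemma mH3 : Sg * Tg ^ 2 ∈ Hh := Subgroup.subset_closure (by simp [gens])
lemma mH4 : Sg⁻¹ * Sg⁻¹ * Tg ^ 2 * Sg ∈ Hh := Subgroup.subset_closure (by simp [gens])
lemma mH5 : Sg⁻¹ * Tg ^ 2 * Sg ^ 2 ∈ Hh := Subgroup.subset_closure (by simp [gens])
lemma mH6 : Tg⁻¹ * Sg * Tg ∈ Hh := Subgroup.subset_closure (by simp [gens])
lemma mH7 : Tg * Sg * Tg⁻¹ ∈ Hh := Subgroup.subset_closure (by simp [gens])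
lemma mH8 : (Tg * Sg)⁻¹ * Sg * (Tg * Sg) ∈ Hh := Subgroup.subset_closure (by simp [gens])
lemma mH9 : (Tg⁻¹ * Sg)⁻¹ * Sg * (Tg⁻¹ * Sg) ∈ Hh := Subgroup.subset_closure (by simp [gens])

lemma step_letter (w : F) (hw : w = Sg ∨ w = Tg ∨ w = Sg⁻¹ ∨ w = Tg⁻¹) :
    ∀ i : Fin 8, ∃ j : Fin 8, R i * w * (R j)⁻¹ ∈ Hh := by
  intro i
  rcases hw with rfl | rfl | rfl | rfl
  · fin_cases i
    · exact ⟨1, Hmem_congr (by decide) ((one_mem Hh) : ((1 : F)) ∈ Hh)⟩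
    · exact ⟨5, Hmem_congr (by decide) ((one_mem Hh) : ((1 : F)) ∈ Hh)⟩
    · exact ⟨0, Hmem_congr (by decide) ((one_mem Hh) : ((1 : F)) ∈ Hh)⟩
    · exact ⟨3, Hmem_congr (by decide) ((mH7) : (Tg * Sg * Tg⁻¹) ∈ Hh)⟩
    · exact ⟨4, Hmem_congr (by decide) ((mH6) : (Tg⁻¹ * Sg * Tg) ∈ Hh)⟩
    · exact ⟨2, Hmem_congr (by decide) ((mH1) : (Sg ^ 4) ∈ Hh)⟩
    · exact ⟨6, Hmem_congr (by decide) ((mH9) : ((Tg⁻¹ * Sg)⁻¹ * Sg * (Tg⁻¹ * Sg)) ∈ Hh)⟩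
    · exact ⟨7, Hmem_congr (by decide) ((mH8) : ((Tg * Sg)⁻¹ * Sg * (Tg * Sg)) ∈ Hh)⟩
  · fin_cases i
    · exact ⟨3, Hmem_congr (by decide) ((one_mem Hh) : ((1 : F)) ∈ Hh)⟩
    · exact ⟨4, Hmem_congr (by decide) ((mH3) : (Sg * Tg ^ 2) ∈ Hh)⟩
    · exact ⟨6, Hmem_congr (by decide) ((one_mem Hh) : ((1 : F)) ∈ Hh)⟩
    · exact ⟨1, Hmem_congr (by decide) ((mul_mem (mH2) (inv_mem mH3)) : ((Tg ^ 4) * ((Sg * Tg ^ 2)⁻¹)) ∈ Hh)⟩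
    · exact ⟨0, Hmem_congr (by decide) ((one_mem Hh) : ((1 : F)) ∈ Hh)⟩
    · exact ⟨7, Hmem_congr (by decide) ((mul_mem (mH1) (mH4)) : ((Sg ^ 4) * (Sg⁻¹ * Sg⁻¹ * Tg ^ 2 * Sg)) ∈ Hh)⟩
    · exact ⟨5, Hmem_congr (by decide) ((mul_mem (mH5) (inv_mem mH1)) : ((Sg⁻¹ * Tg ^ 2 * Sg ^ 2) * ((Sg ^ 4)⁻¹)) ∈ Hh)⟩
    · exact ⟨2, Hmem_congr (by decide) ((one_mem Hh) : ((1 : F)) ∈ Hh)⟩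
  · fin_cases i
    · exact ⟨2, Hmem_congr (by decide) ((one_mem Hh) : ((1 : F)) ∈ Hh)⟩
    · exact ⟨0, Hmem_congr (by decide) ((one_mem Hh) : ((1 : F)) ∈ Hh)⟩
    · exact ⟨5, Hmem_congr (by decide) ((inv_mem mH1) : ((Sg ^ 4)⁻¹) ∈ Hh)⟩
    · exact ⟨3, Hmem_congr (by decide) ((inv_mem mH7) : ((Tg * Sg * Tg⁻¹)⁻¹) ∈ Hh)⟩
    · exact ⟨4, Hmem_congr (by decide) ((inv_mem mH6) : ((Tg⁻¹ * Sg * Tg)⁻¹) ∈ Hh)⟩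
    · exact ⟨1, Hmem_congr (by decide) ((one_mem Hh) : ((1 : F)) ∈ Hh)⟩
    · exact ⟨6, Hmem_congr (by decide) ((inv_mem mH9) : (((Tg⁻¹ * Sg)⁻¹ * Sg * (Tg⁻¹ * Sg))⁻¹) ∈ Hh)⟩
    · exact ⟨7, Hmem_congr (by decide) ((inv_mem mH8) : (((Tg * Sg)⁻¹ * Sg * (Tg * Sg))⁻¹) ∈ Hh)⟩
  · fin_cases i
    · exact ⟨4, Hmem_congr (by decide) ((one_mem Hh) : ((1 : F)) ∈ Hh)⟩
    · exact ⟨3, Hmem_congr (by decide) ((mul_mem (mH3) (inv_mem mH2)) : ((Sg * Tg ^ 2) * ((Tg ^ 4)⁻¹)) ∈ Hh)⟩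
    · exact ⟨7, Hmem_congr (by decide) ((one_mem Hh) : ((1 : F)) ∈ Hh)⟩
    · exact ⟨0, Hmem_congr (by decide) ((one_mem Hh) : ((1 : F)) ∈ Hh)⟩
    · exact ⟨1, Hmem_congr (by decide) ((inv_mem mH3) : ((Sg * Tg ^ 2)⁻¹) ∈ Hh)⟩
    · exact ⟨6, Hmem_congr (by decide) ((mul_mem (mH1) (inv_mem mH5)) : ((Sg ^ 4) * ((Sg⁻¹ * Tg ^ 2 * Sg ^ 2)⁻¹)) ∈ Hh)⟩
    · exact ⟨2, Hmem_congr (by decide) ((one_mem Hh) : ((1 : F)) ∈ Hh)⟩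
    · exact ⟨5, Hmem_congr (by decide) ((mul_mem (inv_mem mH4) (inv_mem mH1)) : (((Sg⁻¹ * Sg⁻¹ * Tg ^ 2 * Sg)⁻¹) * ((Sg ^ 4)⁻¹)) ∈ Hh)⟩

lemma cover (g : F) : ∀ i : Fin 8, ∃ j : Fin 8, R i * g * (R j)⁻¹ ∈ Hh := by
  refine FreeGroup.induction_on g ?_ ?_ ?_ ?_
  · intro i
    exact ⟨i, Hmem_congr (by group) (one_mem Hh)⟩
  · intro x
    cases x
    · exact step_letter Sg (Or.inl rfl)
    · exact step_letter Tg (Or.inr (Or.inl rfl))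
  · intro x _
    cases x
    · exact step_letter Sg⁻¹ (Or.inr (Or.inr (Or.inl rfl)))
    · exact step_letter Tg⁻¹ (Or.inr (Or.inr (Or.inr rfl)))
  · intro a b ha hb i
    obtain ⟨j, hj⟩ := ha i
    obtain ⟨k, hk⟩ := hb j
    exact ⟨k, Hmem_congr (by group) (mul_mem hj hk)⟩

lemma HleD : Hh ≤ Dsub := by
  rw [Hh, Subgroup.closure_le]
  intro g hg
  simp only [gens, Set.mem_insert_iff, Set.mem_singleton_iff] at hg
  rcases hg with rfl | rfl | rfl | rfl | rfl | rfl | rfl | rfl | rfl <;>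
    (refine ⟨?_, ?_, ?_⟩ <;> simp [inactive_iff, pow_succ, map_mul, map_inv])

lemma R0_eq : R 0 = 1 := rfl

lemma DleH : ∀ g, g ∈ Dsub → g ∈ Hh := by
  intro g hg
  obtain ⟨j, hj⟩ := cover g 0
  rw [R0_eq] at hj
  have hR : R j ∈ Dsub := by
    have h1 : (1 * g * (R j)⁻¹) ∈ Dsub := HleD hj
    have e : R j = (1 * g * (R j)⁻¹)⁻¹ * g := by group
    rw [e]
    exact Dsub.mul_mem (Dsub.inv_mem h1) hg
  have hchi : V j = (false, false, false) := by
    rw [← chiB_R j]; exact memD_chiB hR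
  have hj0 : j = 0 := by
    have hV : ∀ j : Fin 8, V j = (false, false, false) → j = 0 := by decide
    exact hV j hchi
  subst hj0
  rw [R0_eq] at hj
  have e2 : 1 * g * (1 : F)⁻¹ = g := by group
  rwa [e2] at hj

lemma HeqD : Hh = Dsub :=
  le_antisymm HleD DleH

lemma index_eight : Hh.index = 8 := by
  have bij : Function.Bijective (fun j : Fin 8 => (QuotientGroup.mk ((R j)⁻¹) : F ⧸ Hh)) := by
    constructor
    · intro j k h
      have hm : R j * (R k)⁻¹ ∈ Hh := by
        have h2 : ((R j)⁻¹)⁻¹ * (R k)⁻¹ ∈ Hh := QuotientGroup.eq.mp h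
        rwa [inv_inv] at h2
      have hD : R j * (R k)⁻¹ ∈ Dsub := HleD hm
      have h2 := chiB_mul hD (R k)
      have e2 : (R j * (R k)⁻¹) * R k = R j := by group
      rw [e2] at h2
      rw [chiB_R j, chiB_R k] at h2
      have hV : ∀ j k : Fin 8, V j = V k → j = k := by decide
      exact hV j k h2
    · intro q
      induction q using QuotientGroup.induction_on with
      | H g =>
        obtain ⟨j, hj⟩ := cover g⁻¹ 0
        rw [R0_eq] at hj
        refine ⟨j, QuotientGroup.eq.mpr ?_⟩
        exact Hmem_congr (by group) (inv_mem hj)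
  have hc := Nat.card_eq_of_bijective _ bij
  rw [Subgroup.index_eq_card, ← hc]
  simp

end Rabbit

open Rabbit in
theorem stmt5 :
    ((Subgroup.closure gens : Subgroup F) : Set F) =
      {g : F | inactive g ∧ inactive (sec g false) ∧ inactive (sec (sec g false) false)} ∧
    (Subgroup.closure gens : Subgroup F).index = 8 ∧
    psi3 (Sg ^ 4) = Sg ∧
    psi3 (Tg ^ 4) = Tg ∧
    psi3 (Sg * Tg ^ 2) = 1 ∧
    psi3 (Sg⁻¹ * Sg⁻¹ * Tg ^ 2 * Sg) = 1 ∧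
    psi3 (Sg⁻¹ * Tg ^ 2 * Sg ^ 2) = 1 ∧
    psi3 (Tg⁻¹ * Sg * Tg) = 1 ∧
    psi3 (Tg * Sg * Tg⁻¹) = 1 ∧
    psi3 ((Tg * Sg)⁻¹ * Sg * (Tg * Sg)) = 1 ∧
    psi3 ((Tg⁻¹ * Sg)⁻¹ * Sg * (Tg⁻¹ * Sg)) = 1 := by
  refine ⟨?_, index_eight, ?_, ?_, ?_, ?_, ?_, ?_, ?_, ?_, ?_⟩
  · show (Hh : Set F) = _
    rw [HeqD]
    rfl
  all_goals (simp [psi3, pow_succ, map_mul, map_inv]; try decide)
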